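/- Let z₁, …, z_d be distinct points in the unit disc and w₁, …, w_d positive real numbers. Suppose that for every partition of {1,…,d} into disjoint sets T and S there exists a positive harmonic function u on D with u(z_n) ≥ w_n for n ∈ T and u(z_n) ≤ w_n for n ∈ S. Then there exists a positive harmonic function u on D with u(z_n) = w_n for all n = 1, …, d. -/

import Mathlib

/-- The open unit disc in the complex plane. -/
def unitDisc : Set ℂ := Metric.ball 0 1

/-- A real-valued function is harmonic on the unit disc iff it is the real part
of a holomorphic function there (the disc is simply connected). -/
def HarmonicOnDisc (u : ℂ → ℝ) : Prop :=
  ∃ f : ℂ → ℂ, DifferentiableOn ℂ f unitDisc ∧ ∀ z ∈ unitDisc, u z = (f z).re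

/-- If for every partition `{1,…,d} = T ∪ S` there is a positive harmonic
function `u` with `u(z_n) ≥ w_n` on `T` and `u(z_n) ≤ w_n` on `S`, then some
positive harmonic function interpolates `w_n` at `z_n` for all `n`. -/
theorem interpolation_from_one_sided (d : ℕ) (z : Fin d → ℂ)
    (hz : ∀ n, z n ∈ unitDisc) (hinj : Function.Injective z)
    (w : Fin d → ℝ) (hw : ∀ n, 0 < w n)
    (H : ∀ T : Finset (Fin d), ∃ u : ℂ → ℝ, HarmonicOnDisc u ∧
      (∀ ζ ∈ unitDisc, 0 < u ζ) ∧
      (∀ n ∈ T, w n ≤ u (z n)) ∧ (∀ n, n ∉ T → u (z n) ≤ w n)) :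
    ∃ u : ℂ → ℝ, HarmonicOnDisc u ∧ (∀ ζ ∈ unitDisc, 0 < u ζ) ∧
      ∀ n, u (z n) = w n := by
  classical
  rcases Nat.eq_zero_or_pos d with hd | hd
  · subst hd
    exact ⟨fun _ => 1, ⟨fun _ => 1, differentiableOn_const _, fun _ _ => by simp⟩,
      fun _ _ => one_pos, fun n => n.elim0⟩
  -- choose the one-sided functions and their holomorphic representatives
  choose U hU hpos hge hle using H
  choose F hFdiff hFre using hU
  -- the vectors of values
  set v : Finset (Fin d) → Fin d → ℝ := fun T n => U T (z n) with hv
  have hvpos : ∀ T n, 0 < v T n := fun T n => hpos T (z n) (hz n)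
  have huniv : (Finset.univ : Finset (Fin d)).Nonempty := by
    simpa [Finset.univ_nonempty_iff] using Fin.pos_iff_nonempty.mp hd
  set s₀ : ℝ := ∑ n, w n with hs₀def
  have hs₀ : 0 < s₀ := Finset.sum_pos (fun n _ => hw n) huniv
  set σ : Finset (Fin d) → ℝ := fun T => ∑ n, v T n with hσdef
  have hσ : ∀ T, 0 < σ T := fun T => Finset.sum_pos (fun n _ => hvpos T n) huniv
  set q : Finset (Fin d) → Fin d → ℝ := fun T => (s₀ / σ T) • v T with hq
  have hqsum : ∀ T, ∑ n, q T n = s₀ := by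
    intro T
    simp only [hq, Pi.smul_apply, smul_eq_mul, ← Finset.mul_sum, hσdef]
    rw [div_mul_eq_mul_div, mul_div_assoc, div_self (by simpa [hσdef] using (hσ T).ne'), mul_one]
  -- key claim : w lies in the convex hull of the q T's
  have key : w ∈ convexHull ℝ (Set.range q) := by
    by_contra hcon
    obtain ⟨f, c, hfw, hfq⟩ :=
      geometric_hahn_banach_point_closed (convex_convexHull ℝ _)
        ((Set.finite_range q).isClosed_convexHull (𝕜 := ℝ)) hcon
    -- the linear functional g
    set g : (Fin d → ℝ) → ℝ := fun x => c / s₀ * (∑ n, x n) - f x with hg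
    set b : Fin d → ℝ := fun n => c / s₀ - f (Pi.single n 1) with hb
    have hgx : ∀ x : Fin d → ℝ, g x = ∑ n, x n * b n := by
      intro x
      have hfx : f x = ∑ n, x n * f (Pi.single n 1) := by
        have hx := pi_eq_sum_univ x
        calc f x = f (∑ i, x i • fun j => if i = j then (1:ℝ) else 0) := by rw [← hx]
        _ = ∑ i, x i • f (fun j => if i = j then (1:ℝ) else 0) := by
              rw [map_sum]; simp
        _ = ∑ n, x n * f (Pi.single n 1) := by
              refine Finset.sum_congr rfl fun n _ => ?_
              rw [smul_eq_mul]
              congr 2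
              ext j
              simp [Pi.single_apply, eq_comm]
      simp only [hg, hb, hfx, mul_sub, Finset.mul_sum, ← Finset.sum_sub_distrib]
      refine Finset.sum_congr rfl fun n _ => ?_
      ring
    have hgw : 0 < g w := by
      simp only [hg, ← hs₀def]
      have : c / s₀ * s₀ = c := by field_simp
      rw [this]; linarith
    have hgq : ∀ T, g (q T) < 0 := by
      intro T
      have := hfq (q T) (subset_convexHull ℝ _ ⟨T, rfl⟩)
      simp only [hg, hqsum T]
      have : c / s₀ * s₀ = c := by field_simp
      rw [this]; linarith [hfq (q T) (subset_convexHull ℝ _ ⟨T, rfl⟩)]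
    have hgv : ∀ T, g (v T) < 0 := by
      intro T
      have hlin : g (q T) = (s₀ / σ T) * g (v T) := by
        rw [hgx, hgx, Finset.mul_sum]
        refine Finset.sum_congr rfl fun n _ => ?_
        simp [hq]; ring
      have hpos' : 0 < s₀ / σ T := div_pos hs₀ (hσ T)
      have h2 : (s₀ / σ T) * g (v T) < 0 := hlin ▸ hgq T
      by_contra hc
      push_neg at hc
      exact absurd h2 (not_lt.mpr (mul_nonneg hpos'.le hc))
    -- derive the contradiction with T* = {n | 0 < b n}
    set T' : Finset (Fin d) := Finset.univ.filter fun n => 0 < b n with hT'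
    have hterm : ∀ n, w n * b n ≤ v T' n * b n := by
      intro n
      by_cases hn : 0 < b n
      · have hmem : n ∈ T' := by simp [hT', hn]
        exact mul_le_mul_of_nonneg_right (hge T' n hmem) hn.le
      · have hmem : n ∉ T' := by simp [hT', hn]
        have h1 : v T' n ≤ w n := hle T' n hmem
        have h2 : b n ≤ 0 := le_of_not_gt hn
        nlinarith
    have : g w ≤ g (v T') := by
      rw [hgx, hgx]
      exact Finset.sum_le_sum fun n _ => hterm n
    linarith [hgv T']
  -- extract a convex combination
  rw [mem_convexHull_iff_exists_fintype] at key
  obtain ⟨ι, hι, μ, y, hμ0, hμ1, hy, hsum⟩ := key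
  choose Ti hTi using hy
  set c' : ι → ℝ := fun i => μ i * (s₀ / σ (Ti i)) with hc'
  have hc'0 : ∀ i, 0 ≤ c' i := fun i =>
    mul_nonneg (hμ0 i) (div_pos hs₀ (hσ (Ti i))).le
  refine ⟨fun ζ => ∑ i, c' i * U (Ti i) ζ, ?_, ?_, ?_⟩
  · refine ⟨fun ζ => ∑ i, (c' i : ℂ) * F (Ti i) ζ, ?_, ?_⟩
    · exact DifferentiableOn.fun_sum fun i _ =>
        (differentiableOn_const _).mul (hFdiff (Ti i))
    · intro ζ hζ
      rw [Complex.re_sum]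
      refine Finset.sum_congr rfl fun i _ => ?_
      rw [hFre (Ti i) ζ hζ]
      simp [Complex.mul_re]
  · intro ζ hζ
    obtain ⟨i₀, hi₀⟩ : ∃ i, 0 < μ i := by
      by_contra h
      push_neg at h
      have : ∑ i, μ i = 0 :=
        le_antisymm (Finset.sum_nonpos fun i _ => h i)
          (Finset.sum_nonneg fun i _ => hμ0 i)
      rw [hμ1] at this; norm_num at this
    refine Finset.sum_pos' (fun i _ => mul_nonneg (hc'0 i) (hpos (Ti i) ζ hζ).le)
      ⟨i₀, Finset.mem_univ _, ?_⟩
    exact mul_pos (mul_pos hi₀ (div_pos hs₀ (hσ (Ti i₀)))) (hpos (Ti i₀) ζ hζ)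
  · intro n
    have := congrFun hsum n
    simp only [Finset.sum_apply, Pi.smul_apply, smul_eq_mul] at this
    rw [← this]
    refine Finset.sum_congr rfl fun i _ => ?_
    rw [← hTi i]
    simp [hq, hc', hv]; ring
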